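/- Let f: ℝⁿ → ℝ be m-strongly convex and M-Lipschitz-differentiable with minimizer x*. Let x, z be points, δ = x - z, and consider the deterministic LGD step x₊ = x - η(∇f(x) + λ(x - z)) with η ≤ 1/(2M), ηλ ≤ m/(2M), η√λ ≤ √m/(M√2). Then f(x₊) - f(x*) ≤ (1 - mη)(f(x) - f(x*)) - ηλ(f(x) - f(z)). -/

import Mathlib

set_option maxHeartbeats 1000000

open scoped InnerProductSpace

lemma descent_lemma {n : ℕ} (f : EuclideanSpace ℝ (Fin n) → ℝ) (M : ℝ) (hM : 0 < M)
    (hdiff : Differentiable ℝ f)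
    (hlip : ∀ x y, ‖gradient f x - gradient f y‖ ≤ M * ‖x - y‖)
    (x y : EuclideanSpace ℝ (Fin n)) :
    f y ≤ f x + ⟪gradient f x, y - x⟫_ℝ + M / 2 * ‖y - x‖ ^ 2 := by
  set v := y - x with hv
  have hline : ∀ t : ℝ, HasDerivAt (fun t : ℝ => x + t • v) v t := by
    intro t
    simpa using ((hasDerivAt_id t).smul_const v).const_add x
  have hderiv : ∀ t : ℝ,
      HasDerivAt (fun t : ℝ => f (x + t • v)) ⟪gradient f (x + t • v), v⟫_ℝ t := by
    intro t
    have h1 := (hdiff (x + t • v)).hasGradientAt.hasFDerivAt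
    have := h1.comp_hasDerivAt t (hline t)
    simpa [Function.comp_def] using this
  have hgradcont : Continuous (gradient f) := by
    have : LipschitzWith (Real.toNNReal M) (gradient f) := by
      apply LipschitzWith.of_dist_le_mul
      intro a b
      simp only [dist_eq_norm]
      calc ‖gradient f a - gradient f b‖ ≤ M * ‖a - b‖ := hlip a b
        _ = Real.toNNReal M * ‖a - b‖ := by rw [Real.coe_toNNReal _ hM.le]
    exact this.continuous
  have hcont : Continuous (fun t : ℝ => ⟪gradient f (x + t • v), v⟫_ℝ) := by
    exact (hgradcont.comp (by continuity)).inner continuous_const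
  have hFTC : ∫ t in (0:ℝ)..1, ⟪gradient f (x + t • v), v⟫_ℝ = f y - f x := by
    have := intervalIntegral.integral_eq_sub_of_hasDerivAt
      (f := fun t : ℝ => f (x + t • v)) (fun t _ => hderiv t)
      (hcont.intervalIntegrable 0 1)
    simpa [hv] using this
  have hbound : ∫ t in (0:ℝ)..1, ⟪gradient f (x + t • v), v⟫_ℝ ≤
      ∫ t in (0:ℝ)..1, (⟪gradient f x, v⟫_ℝ + M * t * ‖v‖ ^ 2) := by
    apply intervalIntegral.integral_mono_on (by norm_num)
      (hcont.intervalIntegrable 0 1)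
      (by exact (continuous_const.add ((continuous_const.mul continuous_id).mul continuous_const)).intervalIntegrable 0 1)
    intro t ht
    have h1 : ⟪gradient f (x + t • v) - gradient f x, v⟫_ℝ ≤ M * t * ‖v‖ ^ 2 := by
      calc ⟪gradient f (x + t • v) - gradient f x, v⟫_ℝ
          ≤ ‖gradient f (x + t • v) - gradient f x‖ * ‖v‖ := real_inner_le_norm _ _
        _ ≤ (M * ‖(x + t • v) - x‖) * ‖v‖ := by
            have := hlip (x + t • v) x
            exact mul_le_mul_of_nonneg_right this (norm_nonneg v)
        _ = M * t * ‖v‖ ^ 2 := by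
            have : ‖(x + t • v) - x‖ = t * ‖v‖ := by
              simp [norm_smul, abs_of_nonneg ht.1]
            rw [this]; ring
    have h2 : ⟪gradient f (x + t • v), v⟫_ℝ =
        ⟪gradient f x, v⟫_ℝ + ⟪gradient f (x + t • v) - gradient f x, v⟫_ℝ := by
      rw [inner_sub_left]; ring
    linarith
  have hint : ∫ t in (0:ℝ)..1, (⟪gradient f x, v⟫_ℝ + M * t * ‖v‖ ^ 2)
      = ⟪gradient f x, v⟫_ℝ + M / 2 * ‖v‖ ^ 2 := by
    have h2 : ∫ t in (0:ℝ)..1, M * t * ‖v‖ ^ 2 = M / 2 * ‖v‖ ^ 2 := by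
      have h3 : ∫ t in (0:ℝ)..1, M * t * ‖v‖ ^ 2 = (M * ‖v‖^2) * ∫ t in (0:ℝ)..1, t := by
        rw [← intervalIntegral.integral_const_mul]; congr 1; ext t; ring
      rw [h3, integral_id]; ring
    have hc : IntervalIntegrable (fun _ : ℝ => ⟪gradient f x, v⟫_ℝ)
        MeasureTheory.volume 0 1 := intervalIntegrable_const
    have hmt : IntervalIntegrable (fun t : ℝ => M * t * ‖v‖ ^ 2)
        MeasureTheory.volume 0 1 := (Continuous.intervalIntegrable (by fun_prop) 0 1)
    rw [intervalIntegral.integral_add hc hmt, h2, intervalIntegral.integral_const]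
    simp
  rw [hFTC] at hbound
  rw [hint] at hbound
  linarith

theorem stmt_16 {n : ℕ} (f : EuclideanSpace ℝ (Fin n) → ℝ) (m M η lam : ℝ)
    (hm : 0 < m) (hM : 0 < M)
    (hdiff : Differentiable ℝ f)
    (hconv : ∀ x y, f x + ⟪gradient f x, y - x⟫_ℝ + m / 2 * ‖y - x‖ ^ 2 ≤ f y)
    (hlip : ∀ x y, ‖gradient f x - gradient f y‖ ≤ M * ‖x - y‖)
    (xstar : EuclideanSpace ℝ (Fin n)) (hmin : ∀ y, f xstar ≤ f y)
    (hη0 : 0 ≤ η) (hlam0 : 0 ≤ lam)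
    (hη : η ≤ 1 / (2 * M)) (hηlam : η * lam ≤ m / (2 * M))
    (hηslam : η * Real.sqrt lam ≤ Real.sqrt m / (M * Real.sqrt 2))
    (x z : EuclideanSpace ℝ (Fin n)) :
    f (x - η • (gradient f x + lam • (x - z))) - f xstar ≤
      (1 - m * η) * (f x - f xstar) - η * lam * (f x - f z) := by
  have hMη : M * η ≤ 1 / 2 := by
    have h := mul_le_mul_of_nonneg_left hη hM.le
    have h2 : M * (1 / (2 * M)) = 1 / 2 := by field_simp
    linarith
  have hMηlam : M * (η * lam) ≤ m / 2 := by
    have h := mul_le_mul_of_nonneg_left hηlam hM.le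
    have h2 : M * (m / (2 * M)) = m / 2 := by field_simp
    linarith
  set g := gradient f x with hg
  set δ := x - z with hδ
  set p := x - η • (g + lam • δ) with hp
  set G := ‖g‖ with hG
  set D := ‖δ‖ with hD
  set I := ⟪g, δ⟫_ℝ with hI
  -- F1 : descent
  have hpx : p - x = (-η) • (g + lam • δ) := by rw [hp]; module
  have hinner : ⟪g, p - x⟫_ℝ = -η * (G ^ 2 + lam * I) := by
    rw [hpx, real_inner_smul_right, inner_add_right, real_inner_smul_right,
      real_inner_self_eq_norm_sq]
  have hnormsq : ‖p - x‖ ^ 2 = η ^ 2 * (G ^ 2 + 2 * lam * I + lam ^ 2 * D ^ 2) := by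
    rw [hpx]
    have h1 : ‖g + lam • δ‖ ^ 2 = G ^ 2 + 2 * lam * I + lam ^ 2 * D ^ 2 := by
      rw [norm_add_sq_real, real_inner_smul_right, norm_smul, Real.norm_eq_abs,
        abs_of_nonneg hlam0]
      ring
    rw [norm_smul, Real.norm_eq_abs, abs_neg, mul_pow, sq_abs, h1]
  have F1 : f p ≤ f x + (-η * (G ^ 2 + lam * I))
      + M / 2 * (η ^ 2 * (G ^ 2 + 2 * lam * I + lam ^ 2 * D ^ 2)) := by
    have := descent_lemma f M hM hdiff hlip x p
    rw [hinner, hnormsq] at this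
    exact this
  -- F2 : strong convexity at (x, z)
  have F2 : (f x - f z) + m / 2 * D ^ 2 ≤ I := by
    have := hconv x z
    have hzx : z - x = -δ := by rw [hδ]; module
    rw [hzx, inner_neg_right, norm_neg] at this
    rw [← hg, ← hD, ← hI] at this
    linarith
  -- F3 : PL inequality
  have F3 : 2 * m * (f x - f xstar) ≤ G ^ 2 := by
    have hc := hconv x xstar
    set w := xstar - x with hw
    have hkey : 0 ≤ ‖m • w + g‖ ^ 2 := sq_nonneg _
    have hexp : ‖m • w + g‖ ^ 2
        = m ^ 2 * ‖w‖ ^ 2 + 2 * (m * ⟪w, g⟫_ℝ) + G ^ 2 := by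
      rw [norm_add_sq_real, real_inner_smul_left, norm_smul, Real.norm_eq_abs,
        abs_of_pos hm]
      ring
    rw [hexp] at hkey
    have hsym : ⟪g, w⟫_ℝ = ⟪w, g⟫_ℝ := real_inner_comm _ _
    rw [← hg] at hc
    rw [hsym] at hc
    have hc' : m * ⟪w, g⟫_ℝ ≤ m * (f xstar - f x - m / 2 * ‖w‖ ^ 2) := by
      apply mul_le_mul_of_nonneg_left _ hm.le
      linarith
    nlinarith [hkey, hc']
  -- F4 : Cauchy–Schwarz
  have F4 : I ≤ G * D := real_inner_le_norm g δ
  -- F5 : Young-type inequality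
  have hA : (0:ℝ) ≤ η / 2 * (1 - M * η) := by nlinarith
  have hB : (0:ℝ) ≤ η * lam / 2 * (m - M * (η * lam)) := by nlinarith [mul_nonneg hη0 hlam0]
  have F5 : M * η ^ 2 * lam * (G * D) ≤
      (η / 2 * (1 - M * η)) * G ^ 2 + (η * lam / 2 * (m - M * (η * lam))) * D ^ 2 := by
    rcases eq_or_lt_of_le hη0 with hη0' | hη0'
    · simp [← hη0']
    · set A := η / 2 * (1 - M * η) with hAe
      set B := η * lam / 2 * (m - M * (η * lam)) with hBe
      set c := M * η ^ 2 * lam with hce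
      have hA' : 0 < A := by
        rw [hAe]; nlinarith
      have hc2 : c ^ 2 ≤ 4 * A * B := by
        rw [hce, hAe, hBe]
        have h1 : η ^ 2 * lam * ((M * η) * (M * (η * lam))) ≤
            η ^ 2 * lam * ((1 - M * η) * (m - M * (η * lam))) := by
          apply mul_le_mul_of_nonneg_left _ (by positivity)
          apply mul_le_mul (by linarith) (by linarith)
            (by positivity) (by linarith)
        nlinarith [h1]
      have h4 : 0 ≤ 4 * A * (A * G ^ 2 + B * D ^ 2 - c * (G * D)) := by
        nlinarith [sq_nonneg (2 * A * G - c * D),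
          mul_le_mul_of_nonneg_right hc2 (sq_nonneg D)]
      nlinarith [h4, hA']
  -- combine
  have hc0 : 0 ≤ M * η ^ 2 * lam := by positivity
  have hI4 : M * η ^ 2 * lam * I ≤ M * η ^ 2 * lam * (G * D) :=
    mul_le_mul_of_nonneg_left F4 hc0
  have hηI : η * lam * ((f x - f z) + m / 2 * D ^ 2) ≤ η * lam * I :=
    mul_le_mul_of_nonneg_left F2 (mul_nonneg hη0 hlam0)
  have hGa : η * (2 * m * (f x - f xstar)) ≤ η * G ^ 2 :=
    mul_le_mul_of_nonneg_left F3 hη0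
  linarith [F1, hI4, hηI, hGa, F5]
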